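/- Let D be a domain, R = D[X₁,…,Xₙ], and let I, J be nonzero ideals with mdeg(I) = d, mdeg(J) = e, mdeg(IJ) = m (so m = d + e). Then the set (IJ)[m] of degree-m homogeneous components of elements of IJ equals the D-module product I[d]·J[e], where I[d] = {f_d : f ∈ I} and the product consists of all finite sums of products a·b with a ∈ I[d], b ∈ J[e]. -/

import Mathlib

open MvPolynomial Finsupp

lemma degAdd {n : ℕ} (a b : Fin n →₀ ℕ) : (a + b).degree = a.degree + b.degree := by
  simp only [Finsupp.degree_eq_weight_one, map_add]

section
variable {D : Type*} [CommRing D] {n : ℕ}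

lemma coeff_zero_of_lt {f : MvPolynomial (Fin n) D} {d : ℕ}
    (h : ∀ i < d, homogeneousComponent i f = 0) {μ : Fin n →₀ ℕ}
    (hμ : μ.degree < d) : coeff μ f = 0 := by
  have h2 := coeff_homogeneousComponent (σ := Fin n) (R := D) μ.degree f μ
  rw [h _ hμ] at h2
  simpa using h2.symm

lemma coeff_mul_zero {f g : MvPolynomial (Fin n) D} {d e : ℕ}
    (hf : ∀ i < d, homogeneousComponent i f = 0)
    (hg : ∀ j < e, homogeneousComponent j g = 0) {μ : Fin n →₀ ℕ}
    (hμ : μ.degree < d + e) : coeff μ (f * g) = 0 := by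
  rw [coeff_mul]
  apply Finset.sum_eq_zero
  rintro ⟨ν, ρ⟩ hp
  rw [Finset.HasAntidiagonal.mem_antidiagonal] at hp
  have hdeg : ν.degree + ρ.degree < d + e := by rw [← degAdd, hp]; exact hμ
  rcases lt_or_ge ν.degree d with h1 | h1
  · rw [coeff_zero_of_lt hf h1, zero_mul]
  · have : ρ.degree < e := by omega
    rw [coeff_zero_of_lt hg this, mul_zero]

lemma comp_mul_lt {f g : MvPolynomial (Fin n) D} {d e : ℕ}
    (hf : ∀ i < d, homogeneousComponent i f = 0)
    (hg : ∀ j < e, homogeneousComponent j g = 0) {k : ℕ} (hk : k < d + e) :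
    homogeneousComponent k (f * g) = 0 := by
  ext μ
  rw [coeff_homogeneousComponent, coeff_zero]
  split_ifs with h
  · exact coeff_mul_zero hf hg (h ▸ hk)
  · rfl

lemma comp_mul_eq {f g : MvPolynomial (Fin n) D} {d e : ℕ}
    (hf : ∀ i < d, homogeneousComponent i f = 0)
    (hg : ∀ j < e, homogeneousComponent j g = 0) :
    homogeneousComponent (d + e) (f * g) =
      homogeneousComponent d f * homogeneousComponent e g := by
  ext μ
  rw [coeff_homogeneousComponent, coeff_mul, coeff_mul]
  split_ifs with h
  · apply Finset.sum_congr rfl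
    rintro ⟨ν, ρ⟩ hp
    rw [Finset.HasAntidiagonal.mem_antidiagonal] at hp
    have hdeg : ν.degree + ρ.degree = d + e := by rw [← degAdd, hp, h]
    simp only [coeff_homogeneousComponent]
    rcases lt_trichotomy ν.degree d with h1 | h1 | h1
    · rw [coeff_zero_of_lt hf h1, if_neg (by omega), zero_mul, zero_mul]
    · have h2 : ρ.degree = e := by omega
      rw [if_pos h1, if_pos h2]
    · have h2 : ρ.degree < e := by omega
      rw [coeff_zero_of_lt hg h2, if_neg (by omega)]
      simp
  · symm
    apply Finset.sum_eq_zero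
    rintro ⟨ν, ρ⟩ hp
    rw [Finset.HasAntidiagonal.mem_antidiagonal] at hp
    simp only [coeff_homogeneousComponent]
    split_ifs with h1 h2
    · exact absurd (by rw [← hp, degAdd, h1, h2]) h
    all_goals simp

lemma exists_comp_ne_zero {f : MvPolynomial (Fin n) D} (hf : f ≠ 0) :
    ∃ i, homogeneousComponent i f ≠ 0 := by
  by_contra h
  push_neg at h
  apply hf
  rw [← sum_homogeneousComponent f]
  exact Finset.sum_eq_zero fun i _ => h i

end

/-- The set `I[i]` of degree-`i` homogeneous components of elements of `I`. -/
def compSet {D : Type*} [CommRing D] {n : ℕ}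
    (I : Ideal (MvPolynomial (Fin n) D)) (i : ℕ) : Set (MvPolynomial (Fin n) D) :=
  {g | ∃ f ∈ I, MvPolynomial.homogeneousComponent i f = g}

/-- The min-degree of an ideal of a polynomial ring. -/
noncomputable def mdegI {D : Type*} [CommRing D] {n : ℕ}
    (I : Ideal (MvPolynomial (Fin n) D)) : ℕ :=
  sInf {d : ℕ | ∃ f ∈ I, MvPolynomial.homogeneousComponent d f ≠ 0}

/-- Let `D` be a domain, `R = D[X₁,…,Xₙ]`, and `I, J` nonzero ideals with `mdeg(I) = d`,
`mdeg(J) = e`, `mdeg(IJ) = m`. Then `(IJ)[m] = I[d] · J[e]`, where the module product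
consists of all finite sums of products `a·b` with `a ∈ compSet I d`, `b ∈ compSet J e`. -/
theorem compSet_mul {D : Type*} [CommRing D] [IsDomain D] {n : ℕ}
    (I J : Ideal (MvPolynomial (Fin n) D)) (hI : I ≠ ⊥) (hJ : J ≠ ⊥)
    (d e m : ℕ) (hd : mdegI I = d) (he : mdegI J = e) (hm : mdegI (I * J) = m) :
    compSet (I * J) m =
      ↑(AddSubmonoid.closure
        {x : MvPolynomial (Fin n) D | ∃ a ∈ compSet I d, ∃ b ∈ compSet J e, x = a * b}) := by
  subst hd he hm
  have hIv : ∀ f ∈ I, ∀ i < mdegI I, homogeneousComponent i f = 0 := by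
    intro f hf i hi
    by_contra hne
    have hmem : i ∈ {d : ℕ | ∃ f ∈ I, MvPolynomial.homogeneousComponent d f ≠ 0} := ⟨f, hf, hne⟩
    exact absurd (Nat.sInf_le hmem) (not_le.mpr hi)
  have hJv : ∀ g ∈ J, ∀ j < mdegI J, homogeneousComponent j g = 0 := by
    intro g hg j hj
    by_contra hne
    have hmem : j ∈ {d : ℕ | ∃ g ∈ J, MvPolynomial.homogeneousComponent d g ≠ 0} := ⟨g, hg, hne⟩
    exact absurd (Nat.sInf_le hmem) (not_le.mpr hj)
  have hIJv : ∀ h ∈ I * J, ∀ i < mdegI I + mdegI J, homogeneousComponent i h = 0 := by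
    intro h hh
    refine Submodule.mul_induction_on hh ?_ ?_
    · intro f hf g hg i hi
      exact comp_mul_lt (hIv f hf) (hJv g hg) hi
    · intro x y hx hy i hi
      rw [map_add, hx i hi, hy i hi, add_zero]
  have hSI : mdegI I ∈ {d : ℕ | ∃ f ∈ I, MvPolynomial.homogeneousComponent d f ≠ 0} := by
    apply Nat.sInf_mem
    obtain ⟨f, hfI, hf0⟩ := (Submodule.ne_bot_iff I).mp hI
    obtain ⟨i, hi⟩ := exists_comp_ne_zero hf0
    exact ⟨i, f, hfI, hi⟩
  have hSJ : mdegI J ∈ {d : ℕ | ∃ g ∈ J, MvPolynomial.homogeneousComponent d g ≠ 0} := by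
    apply Nat.sInf_mem
    obtain ⟨g, hgJ, hg0⟩ := (Submodule.ne_bot_iff J).mp hJ
    obtain ⟨i, hi⟩ := exists_comp_ne_zero hg0
    exact ⟨i, g, hgJ, hi⟩
  obtain ⟨f0, hf0I, hf0⟩ := hSI
  obtain ⟨g0, hg0J, hg0⟩ := hSJ
  have hmul : homogeneousComponent (mdegI I + mdegI J) (f0 * g0) ≠ 0 := by
    rw [comp_mul_eq (hIv f0 hf0I) (hJv g0 hg0J)]
    exact mul_ne_zero hf0 hg0
  have hmemIJ : mdegI I + mdegI J ∈
      {d : ℕ | ∃ f ∈ I * J, MvPolynomial.homogeneousComponent d f ≠ 0} :=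
    ⟨f0 * g0, Ideal.mul_mem_mul hf0I hg0J, hmul⟩
  have hmeq : mdegI (I * J) = mdegI I + mdegI J := by
    apply le_antisymm
    · exact Nat.sInf_le hmemIJ
    · apply le_csInf ⟨_, hmemIJ⟩
      rintro i ⟨h, hh, hne⟩
      by_contra hlt
      exact hne (hIJv h hh i (not_le.mp hlt))
  rw [hmeq]
  ext x
  constructor
  · rintro ⟨h, hh, rfl⟩
    refine Submodule.mul_induction_on hh (fun f hf g hg => ?_) (fun x y hx hy => ?_)
    · rw [comp_mul_eq (hIv f hf) (hJv g hg)]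
      exact AddSubmonoid.subset_closure ⟨_, ⟨f, hf, rfl⟩, _, ⟨g, hg, rfl⟩, rfl⟩
    · rw [map_add]
      exact AddSubmonoid.add_mem _ hx hy
  · intro hx
    refine AddSubmonoid.closure_induction ?_ ?_ ?_ hx
    · rintro y ⟨a, ⟨f, hf, rfl⟩, b, ⟨g, hg, rfl⟩, rfl⟩
      exact ⟨f * g, Ideal.mul_mem_mul hf hg, comp_mul_eq (hIv f hf) (hJv g hg)⟩
    · exact ⟨0, Submodule.zero_mem _, map_zero _⟩
    · rintro y z _ _ ⟨h1, hh1, rfl⟩ ⟨h2, hh2, rfl⟩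
      exact ⟨h1 + h2, Submodule.add_mem _ hh1 hh2, map_add _ _ _⟩
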